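/- Let x₁, x₂ ∈ ℤ[ω] satisfy x̄₁·x₁ ≡ x̄₂·x₂ (mod 2), where x̄ denotes complex conjugation. Then there exists m ∈ {0, 1, ..., 7} such that both (x₁ + ω^m·x₂)/√2 ∈ ℤ[ω] and (x₁ − ω^m·x₂)/√2 ∈ ℤ[ω]. -/
import Mathlib


noncomputable section

/-- The eighth root of unity `ω = e^{iπ/4} = (1+i)/√2`. -/
def ω : ℂ := (1 + Complex.I) / Real.sqrt 2

/-- A rational number is dyadic if it has the form `a / 2^n` with `a ∈ ℤ`, `n ∈ ℕ`. -/
def IsDyadic (q : ℚ) : Prop := ∃ (a : ℤ) (n : ℕ), q = a / 2 ^ n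

/-- Membership in the ring `𝔻[ω] = ℤ[1/√2, i]`: complex numbers of the form
`aω³ + bω² + cω + d` with `a, b, c, d` dyadic rationals. -/
def inDω (t : ℂ) : Prop :=
  ∃ a b c d : ℚ, IsDyadic a ∧ IsDyadic b ∧ IsDyadic c ∧ IsDyadic d ∧
    t = (a : ℂ) * ω ^ 3 + (b : ℂ) * ω ^ 2 + (c : ℂ) * ω + (d : ℂ)

/-- Membership in the ring `ℤ[ω]`: complex numbers of the form
`aω³ + bω² + cω + d` with `a, b, c, d ∈ ℤ`. -/
def inZω (t : ℂ) : Prop :=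
  ∃ a b c d : ℤ, t = (a : ℂ) * ω ^ 3 + (b : ℂ) * ω ^ 2 + (c : ℂ) * ω + (d : ℂ)

lemma hrne : (Real.sqrt 2 : ℂ) ≠ 0 := by
  simp [Real.sqrt_eq_zero']
lemma hr2 : (Real.sqrt 2 : ℂ)^2 = 2 := by
  rw [← Complex.ofReal_pow, Real.sq_sqrt (by norm_num : (2:ℝ) ≥ 0)]; norm_num
lemma hrω : (Real.sqrt 2 : ℂ) * ω = 1 + Complex.I := by
  unfold ω; field_simp
lemma hω2 : ω^2 = Complex.I := by
  unfold ω
  rw [div_pow]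
  rw [div_eq_iff (pow_ne_zero 2 hrne), hr2]
  linear_combination Complex.I_sq
lemma hω4 : ω^4 = -1 := by
  have : ω^4 = (ω^2)^2 := by ring
  rw [this, hω2, Complex.I_sq]
lemma hs : (Real.sqrt 2 : ℂ) = ω - ω^3 := by
  apply mul_left_cancel₀ hrne
  have h3 : (Real.sqrt 2:ℂ) * ω^3 = -1 + Complex.I := by
    have : (Real.sqrt 2:ℂ) * ω^3 = ((Real.sqrt 2:ℂ) * ω) * ω^2 := by ring
    rw [this, hrω, hω2]
    linear_combination Complex.I_sq
  rw [mul_sub, hrω, h3]; linear_combination hr2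
lemma hc1 : (starRingEnd ℂ) ω = -ω^3 := by
  have h3 : (Real.sqrt 2:ℂ) * ω^3 = -1 + Complex.I := by
    have : (Real.sqrt 2:ℂ) * ω^3 = ((Real.sqrt 2:ℂ) * ω) * ω^2 := by ring
    rw [this, hrω, hω2]
    linear_combination Complex.I_sq
  apply mul_left_cancel₀ hrne
  rw [show (Real.sqrt 2:ℂ) * -ω^3 = -((Real.sqrt 2:ℂ) * ω^3) by ring, h3]
  unfold ω
  rw [map_div₀]
  simp only [map_add, map_one, Complex.conj_I, Complex.conj_ofReal]
  field_simp
  ring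

lemma hc2 : (starRingEnd ℂ) (ω^2) = -ω^2 := by
  rw [map_pow, hc1]; linear_combination (ω^2) * hω4
lemma hc3 : (starRingEnd ℂ) (ω^3) = -ω := by
  rw [map_pow, hc1]; linear_combination (ω - ω^5) * hω4

lemma int_sqrt2 (m n : ℤ) (h : (m:ℝ) + n * Real.sqrt 2 = 0) : m = 0 ∧ n = 0 := by
  rcases eq_or_ne n 0 with hn | hn
  · subst hn; simp at h; exact ⟨by exact_mod_cast h, rfl⟩
  · exfalso
    apply irrational_sqrt_two
    refine ⟨(-m/n : ℚ), ?_⟩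
    have hn' : (n:ℝ) ≠ 0 := by exact_mod_cast hn
    push_cast
    field_simp
    linarith

lemma indep (a b c d : ℤ) (h : (a:ℂ)*ω^3 + (b:ℂ)*ω^2 + (c:ℂ)*ω + (d:ℂ) = 0) :
    a = 0 ∧ b = 0 ∧ c = 0 ∧ d = 0 := by
  have h2 : (a:ℂ)*(-ω) + (b:ℂ)*(-ω^2) + (c:ℂ)*(-ω^3) + (d:ℂ) = 0 := by
    have := congrArg (starRingEnd ℂ) h
    simp only [map_add, map_mul, hc1, hc2, hc3, map_intCast, map_zero] at this
    linear_combination this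
  have key1 : ((2*(d:ℝ) + (-((a:ℝ)-c)) * Real.sqrt 2 : ℝ) : ℂ) = 0 := by
    push_cast
    rw [hs]
    linear_combination h + h2
  have key2 : ((2*(b:ℝ) + ((a:ℝ)+c) * Real.sqrt 2 : ℝ) : ℂ) * Complex.I = 0 := by
    push_cast
    rw [hs, ← hω2]
    linear_combination h - h2 - ((a:ℂ)+(c:ℂ))*ω*hω4
  rw [mul_eq_zero] at key2
  rcases key2 with key2 | key2
  swap
  · exact absurd key2 Complex.I_ne_zero
  rw [Complex.ofReal_eq_zero] at key1 key2
  have e1 := int_sqrt2 (2*d) (-(a-c)) (by push_cast; linarith)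
  have e2 := int_sqrt2 (2*b) (a+c) (by push_cast; linarith)
  refine ⟨by omega, by omega, by omega, by omega⟩

lemma conj_mul_basis (a b c d : ℤ) :
    (starRingEnd ℂ) ((a:ℂ)*ω^3 + (b:ℂ)*ω^2 + (c:ℂ)*ω + (d:ℂ)) *
      ((a:ℂ)*ω^3 + (b:ℂ)*ω^2 + (c:ℂ)*ω + (d:ℂ)) =
    ((a^2+b^2+c^2+d^2 : ℤ):ℂ) + ((a*b+b*c+c*d-a*d : ℤ):ℂ) * (ω - ω^3) := by
  simp only [map_add, map_mul, hc1, hc2, hc3, map_intCast]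
  push_cast
  linear_combination (-( (a:ℂ)*(c:ℂ)*ω^2) - ((a:ℂ)*(b:ℂ)+(b:ℂ)*(c:ℂ))*ω
    - ((a:ℂ)^2+(b:ℂ)^2+(c:ℂ)^2)) * hω4


lemma half (a b c d : ℤ) (h1 : 2 ∣ a - c) (h2 : 2 ∣ b - d) :
    inZω (((a:ℂ)*ω^3 + (b:ℂ)*ω^2 + (c:ℂ)*ω + (d:ℂ)) / (Real.sqrt 2 : ℂ)) := by
  obtain ⟨k, hk⟩ := h1
  obtain ⟨l, hl⟩ := h2
  refine ⟨l, c + k, d + l, -k, ?_⟩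
  rw [div_eq_iff hrne]
  have ha : a = c + 2*k := by omega
  have hb : b = d + 2*l := by omega
  subst ha hb
  rw [hs]
  push_cast
  linear_combination ((d:ℂ) + (l:ℂ)*ω^2 + ((c:ℂ)+(k:ℂ))*ω) * hω4

lemma zmod_key (A₁ B₁ C₁ D₁ A₂ B₂ C₂ D₂ : ZMod 2)
    (h1 : A₁^2+B₁^2+C₁^2+D₁^2 = A₂^2+B₂^2+C₂^2+D₂^2)
    (h2 : A₁*B₁+B₁*C₁+C₁*D₁-A₁*D₁ = A₂*B₂+B₂*C₂+C₂*D₂-A₂*D₂) :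
    (A₁+C₁ = A₂+C₂ ∧ B₁+D₁ = B₂+D₂) ∨ (A₁+C₁ = B₂+D₂ ∧ B₁+D₁ = A₂+C₂) := by
  revert h1 h2
  revert A₁ B₁ C₁ D₁ A₂ B₂ C₂ D₂
  decide

/-- If `x₁, x₂ ∈ ℤ[ω]` satisfy `x̄₁x₁ ≡ x̄₂x₂ (mod 2)`, then there is `m ∈ {0,…,7}` with
`(x₁ + ω^m x₂)/√2 ∈ ℤ[ω]` and `(x₁ − ω^m x₂)/√2 ∈ ℤ[ω]`. -/
theorem stmt7 (x₁ x₂ : ℂ) (h₁ : inZω x₁) (h₂ : inZω x₂)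
    (h : inZω (((starRingEnd ℂ) x₁ * x₁ - (starRingEnd ℂ) x₂ * x₂) / 2)) :
    ∃ m : ℕ, m ≤ 7 ∧ inZω ((x₁ + ω ^ m * x₂) / (Real.sqrt 2 : ℂ))
      ∧ inZω ((x₁ - ω ^ m * x₂) / (Real.sqrt 2 : ℂ)) := by
  obtain ⟨a₁, b₁, c₁, d₁, hx₁⟩ := h₁
  obtain ⟨a₂, b₂, c₂, d₂, hx₂⟩ := h₂
  obtain ⟨p, q, r, s, hx⟩ := h
  have hx' : (starRingEnd ℂ) x₁ * x₁ - (starRingEnd ℂ) x₂ * x₂ =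
      2*((p:ℂ)*ω^3 + (q:ℂ)*ω^2 + (r:ℂ)*ω + (s:ℂ)) := by
    rw [← hx]; ring
  rw [hx₁, hx₂] at hx'
  have hA := conj_mul_basis a₁ b₁ c₁ d₁
  have hB := conj_mul_basis a₂ b₂ c₂ d₂
  set M₁ : ℤ := a₁*b₁+b₁*c₁+c₁*d₁-a₁*d₁ with hM₁
  set M₂ : ℤ := a₂*b₂+b₂*c₂+c₂*d₂-a₂*d₂ with hM₂
  set N₁ : ℤ := a₁^2+b₁^2+c₁^2+d₁^2 with hN₁
  set N₂ : ℤ := a₂^2+b₂^2+c₂^2+d₂^2 with hN₂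
  have hz := indep (-(M₁-M₂)-2*p) (-2*q) ((M₁-M₂)-2*r) ((N₁-N₂)-2*s)
    (by push_cast; linear_combination hx' - hA + hB)
  have hdN : (2:ℤ) ∣ N₁ - N₂ := ⟨s, by omega⟩
  have hdM : (2:ℤ) ∣ M₁ - M₂ := ⟨r, by omega⟩
  have hzN := (ZMod.intCast_zmod_eq_zero_iff_dvd (N₁ - N₂) 2).mpr hdN
  have hzM := (ZMod.intCast_zmod_eq_zero_iff_dvd (M₁ - M₂) 2).mpr hdM
  rw [hN₁, hN₂] at hzN
  rw [hM₁, hM₂] at hzM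
  push_cast at hzN hzM
  have hkey := zmod_key (a₁ : ZMod 2) (b₁ : ZMod 2) (c₁ : ZMod 2) (d₁ : ZMod 2)
    (a₂ : ZMod 2) (b₂ : ZMod 2) (c₂ : ZMod 2) (d₂ : ZMod 2)
    (by linear_combination hzN) (by linear_combination hzM)
  rcases hkey with ⟨e1, e2⟩ | ⟨e1, e2⟩
  · have d1 : (2:ℤ) ∣ (a₁+c₁) - (a₂+c₂) :=
      (ZMod.intCast_zmod_eq_zero_iff_dvd _ 2).mp (by push_cast; linear_combination e1)
    have d2 : (2:ℤ) ∣ (b₁+d₁) - (b₂+d₂) :=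
      (ZMod.intCast_zmod_eq_zero_iff_dvd _ 2).mp (by push_cast; linear_combination e2)
    refine ⟨0, by norm_num, ?_, ?_⟩
    · have e : x₁ + ω^0 * x₂ = ((a₁+a₂:ℤ):ℂ)*ω^3 + ((b₁+b₂:ℤ):ℂ)*ω^2
          + ((c₁+c₂:ℤ):ℂ)*ω + ((d₁+d₂:ℤ):ℂ) := by
        rw [hx₁, hx₂]; push_cast; ring
      rw [e]; exact half _ _ _ _ (by omega) (by omega)
    · have e : x₁ - ω^0 * x₂ = ((a₁-a₂:ℤ):ℂ)*ω^3 + ((b₁-b₂:ℤ):ℂ)*ω^2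
          + ((c₁-c₂:ℤ):ℂ)*ω + ((d₁-d₂:ℤ):ℂ) := by
        rw [hx₁, hx₂]; push_cast; ring
      rw [e]; exact half _ _ _ _ (by omega) (by omega)
  · have d1 : (2:ℤ) ∣ (a₁+c₁) - (b₂+d₂) :=
      (ZMod.intCast_zmod_eq_zero_iff_dvd _ 2).mp (by push_cast; linear_combination e1)
    have d2 : (2:ℤ) ∣ (b₁+d₁) - (a₂+c₂) :=
      (ZMod.intCast_zmod_eq_zero_iff_dvd _ 2).mp (by push_cast; linear_combination e2)
    refine ⟨1, by norm_num, ?_, ?_⟩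
    · have e : x₁ + ω^1 * x₂ = ((a₁+b₂:ℤ):ℂ)*ω^3 + ((b₁+c₂:ℤ):ℂ)*ω^2
          + ((c₁+d₂:ℤ):ℂ)*ω + ((d₁-a₂:ℤ):ℂ) := by
        rw [hx₁, hx₂]; push_cast; linear_combination (a₂:ℂ)*hω4
      rw [e]; exact half _ _ _ _ (by omega) (by omega)
    · have e : x₁ - ω^1 * x₂ = ((a₁-b₂:ℤ):ℂ)*ω^3 + ((b₁-c₂:ℤ):ℂ)*ω^2
          + ((c₁-d₂:ℤ):ℂ)*ω + ((d₁+a₂:ℤ):ℂ) := by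
        rw [hx₁, hx₂]; push_cast; linear_combination -(a₂:ℂ)*hω4
      rw [e]; exact half _ _ _ _ (by omega) (by omega)
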